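/- arXiv:2501.09844 — 3 statements merged into one kernel-verified Lean document; each statement's English description precedes it below -/
import Mathlib

section
/- Let $\theta_{ij} = |S_i\cap S_j|$ for subsets $S_1,\dots,S_n$ of $\{1,\dots,m\}$ and let $0<p<1$. Then the $n\times n$ matrix with entries $p^{-\theta_{ij}}$ is positive semi-definite, and so is the matrix with entries $(1-p)^{-\theta_{ij}}$. -/
open Finset

lemma aux_psd {m n : ℕ} (S : Fin n → Finset (Fin m)) (q : ℝ) (hq : 1 ≤ q) :
    Matrix.PosSemidef (Matrix.of fun i j : Fin n => q ^ (S i ∩ S j).card) := by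
  have hc : (0:ℝ) ≤ q - 1 := by linarith
  have key : ∀ i j : Fin n,
      q ^ (S i ∩ S j).card
        = ∑ T ∈ (univ : Finset (Fin m)).powerset,
            (q - 1) ^ T.card * ((if T ⊆ S i then (1:ℝ) else 0) * (if T ⊆ S j then (1:ℝ) else 0)) := by
    intro i j
    have h := Finset.prod_add (fun _ : Fin m => q - 1) (fun _ => (1:ℝ)) (S i ∩ S j)
    simp only [Finset.prod_const, Finset.prod_const_one, one_pow, mul_one] at h
    have hq' : q - 1 + 1 = q := by ring
    rw [hq'] at h
    rw [h]
    have e : ∀ T ∈ (univ : Finset (Fin m)).powerset,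
        (q - 1) ^ T.card * ((if T ⊆ S i then (1:ℝ) else 0) * (if T ⊆ S j then (1:ℝ) else 0))
          = if T ∈ (S i ∩ S j).powerset then (q - 1) ^ T.card else 0 := by
      intro T _
      have hm : T ∈ (S i ∩ S j).powerset ↔ (T ⊆ S i ∧ T ⊆ S j) := by
        rw [Finset.mem_powerset, Finset.subset_inter_iff]
      simp only [hm]
      by_cases h1 : T ⊆ S i <;> by_cases h2 : T ⊆ S j <;> simp [h1, h2]
    rw [Finset.sum_congr rfl e, Finset.sum_ite_mem,
      Finset.inter_eq_right.2 (Finset.powerset_mono.2 (Finset.subset_univ _))]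
  rw [Matrix.posSemidef_iff_dotProduct_mulVec]
  constructor
  · ext i j
    simp only [Matrix.conjTranspose_apply, Matrix.of_apply, star_trivial]
    rw [Finset.inter_comm]
  · intro x
    simp only [dotProduct, Matrix.mulVec, Matrix.of_apply, Pi.star_apply,
      star_trivial, dotProduct]
    have e1 : ∀ i j : Fin n, x i * (q ^ (S i ∩ S j).card * x j)
        = ∑ T ∈ (univ : Finset (Fin m)).powerset,
            (q - 1) ^ T.card * ((if T ⊆ S i then x i else 0) * (if T ⊆ S j then x j else 0)) := by
      intro i j
      rw [key, Finset.sum_mul, Finset.mul_sum]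
      apply Finset.sum_congr rfl
      intro T _
      by_cases h1 : T ⊆ S i <;> by_cases h2 : T ⊆ S j <;> simp [h1, h2] <;> try ring
    calc ∑ i, x i * ∑ j, q ^ (S i ∩ S j).card * x j
        = ∑ i, ∑ j, x i * (q ^ (S i ∩ S j).card * x j) := by
          simp [Finset.mul_sum]
      _ = ∑ i, ∑ j, ∑ T ∈ (univ : Finset (Fin m)).powerset,
            (q - 1) ^ T.card * ((if T ⊆ S i then x i else 0) * (if T ⊆ S j then x j else 0)) := by
          simp only [e1]
      _ = ∑ T ∈ (univ : Finset (Fin m)).powerset, ∑ i, ∑ j,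
            (q - 1) ^ T.card * ((if T ⊆ S i then x i else 0) * (if T ⊆ S j then x j else 0)) := by
          rw [Finset.sum_congr rfl fun (i : Fin n) (_ : i ∈ univ) => Finset.sum_comm]
          exact Finset.sum_comm
      _ = ∑ T ∈ (univ : Finset (Fin m)).powerset,
            (q - 1) ^ T.card * (∑ i, if T ⊆ S i then x i else 0) ^ 2 := by
          apply Finset.sum_congr rfl
          intro T _
          rw [sq, Finset.sum_mul_sum]
          simp [Finset.mul_sum]
      _ ≥ 0 := Finset.sum_nonneg fun T _ =>
          mul_nonneg (pow_nonneg hc _) (sq_nonneg _)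

/-- With `θᵢⱼ = |Sᵢ ∩ Sⱼ|` and `0 < p < 1`, both matrices `(p^{-θᵢⱼ})ᵢⱼ` and
`((1-p)^{-θᵢⱼ})ᵢⱼ` are positive semi-definite. -/
theorem stmt9 (m n : ℕ) (S : Fin n → Finset (Fin m))
    (p : ℝ) (hp0 : 0 < p) (hp1 : p < 1) :
    Matrix.PosSemidef
      (Matrix.of fun i j : Fin n => (p ^ (S i ∩ S j).card)⁻¹) ∧
    Matrix.PosSemidef
      (Matrix.of fun i j : Fin n => ((1 - p) ^ (S i ∩ S j).card)⁻¹) := by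
  constructor
  · have h := aux_psd S p⁻¹ (by rw [le_inv_comm₀ one_pos hp0]; simpa using hp1.le)
    simpa only [inv_pow] using h
  · have h := aux_psd S (1 - p)⁻¹
      (by rw [le_inv_comm₀ one_pos (by linarith)]; simpa using hp0.le)
    simpa only [inv_pow] using h
end

section
/- Let $S_1,\dots,S_n\subseteq\{1,\dots,m\}$, $\theta_{ij}=|S_i\cap S_j|$, and $0<p<1$. Define $\Lambda_1 = (p^{-\theta_{ij}}-1)_{ij}$, $\Lambda_0 = ((1-p)^{-\theta_{ij}}-1)_{ij}$, and $\Lambda_\tau = (\mathbb{1}\{S_i\cap S_j\ne\varnothing\})_{ij}$. Then the $2n\times 2n$ block matrix $\begin{pmatrix}\Lambda_1 & \Lambda_\tau\\ \Lambda_\tau & \Lambda_0\end{pmatrix}$ is positive semi-definite. -/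
open Finset

private lemma sum_powerset_pow {ι : Type*} [DecidableEq ι] (T : Finset ι) (x : ℝ) :
    ∑ W ∈ T.powerset, x ^ W.card = (x + 1) ^ T.card := by
  induction T using Finset.induction with
  | empty => simp
  | @insert a s h ih =>
    rw [Finset.sum_powerset_insert h]
    have h2 : ∑ t ∈ s.powerset, x ^ (insert a t).card
        = ∑ t ∈ s.powerset, x * x ^ t.card := by
      refine Finset.sum_congr rfl fun t ht => ?_
      rw [Finset.card_insert_of_notMem fun hat => h (Finset.mem_powerset.mp ht hat),
        pow_succ, mul_comm]
    rw [h2, ← Finset.mul_sum, ih, Finset.card_insert_of_notMem h, pow_succ]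
    ring

private lemma sum_powerset_ite_pow {ι : Type*} [DecidableEq ι] (T : Finset ι) (x : ℝ) :
    ∑ W ∈ T.powerset, (if W.Nonempty then x ^ W.card else 0)
      = (x + 1) ^ T.card - 1 := by
  have h : ∀ W ∈ T.powerset, (if W.Nonempty then x ^ W.card else 0)
      = x ^ W.card - (if W = (∅ : Finset ι) then x ^ W.card else 0) := by
    intro W _
    rcases eq_or_ne W ∅ with h | h
    · simp [h]
    · simp [h, Finset.nonempty_iff_ne_empty.mpr h]
  rw [Finset.sum_congr rfl h, Finset.sum_sub_distrib, sum_powerset_pow,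
    Finset.sum_ite_eq' T.powerset ∅ (fun W => x ^ W.card)]
  simp

private lemma entry_eval {m n : ℕ} (S : Fin n → Finset (Fin m)) (i j : Fin n)
    (u v : ℕ → ℝ) (ε x : ℝ) (huv : ∀ k : ℕ, u k * v k = ε * x ^ k) :
    ∑ W : Finset (Fin m), (if W.Nonempty then
        ((if W ⊆ S i then u W.card else 0) * (if W ⊆ S j then v W.card else 0)) else 0)
      = ε * ((x + 1) ^ (S i ∩ S j).card - 1) := by
  rw [← Finset.sum_subset (Finset.subset_univ ((S i ∩ S j).powerset))]
  · rw [show (∑ W ∈ (S i ∩ S j).powerset, if W.Nonempty then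
        ((if W ⊆ S i then u W.card else 0) * (if W ⊆ S j then v W.card else 0)) else 0)
        = ∑ W ∈ (S i ∩ S j).powerset, ε * (if W.Nonempty then x ^ W.card else 0) from
      Finset.sum_congr rfl fun W hW => by
        have h := Finset.subset_inter_iff.mp (Finset.mem_powerset.mp hW)
        simp only [h.1, h.2, if_true, mul_ite, mul_zero, huv W.card]]
    rw [← Finset.mul_sum, sum_powerset_ite_pow]
  · intro W _ hW
    have h : ¬ (W ⊆ S i ∧ W ⊆ S j) := by
      rw [← Finset.subset_inter_iff]
      exact fun h => hW (Finset.mem_powerset.mpr h)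
    by_cases h1 : W ⊆ S i
    · by_cases h2 : W ⊆ S j
      · exact absurd ⟨h1, h2⟩ h
      · simp [h2]
    · simp [h1]

noncomputable def cvec (m n : ℕ) (S : Fin n → Finset (Fin m)) (p : ℝ)
    (W : Finset (Fin m)) : Fin n ⊕ Fin n → ℝ
  | .inl i => if W ⊆ S i then Real.sqrt ((1 - p) / p) ^ W.card else 0
  | .inr i => if W ⊆ S i then (-1) ^ (W.card + 1) * Real.sqrt (p / (1 - p)) ^ W.card else 0

/-- The block matrix `[[Λ₁, Λτ], [Λτ, Λ₀]]` with
`(Λ₁)ᵢⱼ = p^{-|Sᵢ∩Sⱼ|} - 1`, `(Λ₀)ᵢⱼ = (1-p)^{-|Sᵢ∩Sⱼ|} - 1`,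
`(Λτ)ᵢⱼ = 1{Sᵢ∩Sⱼ ≠ ∅}` is positive semi-definite. -/
theorem stmt10 (m n : ℕ) (S : Fin n → Finset (Fin m))
    (p : ℝ) (hp0 : 0 < p) (hp1 : p < 1)
    (Λ1 Λ0 Λτ : Matrix (Fin n) (Fin n) ℝ)
    (hΛ1 : Λ1 = Matrix.of fun i j => (p ^ (S i ∩ S j).card)⁻¹ - 1)
    (hΛ0 : Λ0 = Matrix.of fun i j => ((1 - p) ^ (S i ∩ S j).card)⁻¹ - 1)
    (hΛτ : Λτ = Matrix.of fun i j => if (S i ∩ S j).Nonempty then 1 else 0) :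
    Matrix.PosSemidef (Matrix.fromBlocks Λ1 Λτ Λτ Λ0) := by
  have hq : 0 < 1 - p := by linarith
  have hxa : (0:ℝ) ≤ (1 - p) / p := by positivity
  have hxb : (0:ℝ) ≤ p / (1 - p) := by positivity
  have hsq : Real.sqrt ((1 - p) / p) * Real.sqrt (p / (1 - p)) = 1 := by
    rw [← Real.sqrt_mul hxa, show (1 - p) / p * (p / (1 - p)) = 1 by field_simp]
    exact Real.sqrt_one
  have hsa : Real.sqrt ((1 - p) / p) ^ 2 = (1 - p) / p := Real.sq_sqrt hxa
  have hsb : Real.sqrt (p / (1 - p)) ^ 2 = p / (1 - p) := Real.sq_sqrt hxb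
  -- indicator value from 0^card
  have hind : ∀ (T : Finset (Fin m)),
      (-1 : ℝ) * (((-1 : ℝ) + 1) ^ T.card - 1) = (if T.Nonempty then (1:ℝ) else 0) := by
    intro T
    rcases T.eq_empty_or_nonempty with h | h
    · simp [h]
    · rw [if_pos h, neg_add_cancel, zero_pow (Finset.card_ne_zero.mpr h)]
      ring
  -- the Gram decomposition
  have key : Matrix.fromBlocks Λ1 Λτ Λτ Λ0
      = ∑ W : Finset (Fin m), if W.Nonempty then
          Matrix.vecMulVec (cvec m n S p W) (cvec m n S p W) else 0 := by
    ext a b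
    rw [Matrix.sum_apply]
    have hsplit : ∀ (W : Finset (Fin m)),
        (if W.Nonempty then Matrix.vecMulVec (cvec m n S p W) (cvec m n S p W) else 0) a b
        = if W.Nonempty then cvec m n S p W a * cvec m n S p W b else 0 := by
      intro W; split <;> simp [Matrix.vecMulVec_apply]
    rw [Finset.sum_congr rfl fun W _ => hsplit W]
    have hp0' : p ≠ 0 := hp0.ne'
    have hq' : (1 : ℝ) - p ≠ 0 := hq.ne'
    rcases a with i | i <;> rcases b with j | j <;> simp only [cvec]
    · rw [entry_eval S i j (fun k => Real.sqrt ((1 - p) / p) ^ k)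
        (fun k => Real.sqrt ((1 - p) / p) ^ k) 1 ((1 - p) / p)
        (fun k => by rw [← mul_pow, ← sq, hsa, one_mul])]
      rw [show (1 - p) / p + 1 = p⁻¹ by field_simp; ring, inv_pow, one_mul]
      simp [hΛ1]
    · rw [entry_eval S i j (fun k => Real.sqrt ((1 - p) / p) ^ k)
        (fun k => (-1) ^ (k + 1) * Real.sqrt (p / (1 - p)) ^ k) (-1) (-1)
        (fun k => by
          rw [show Real.sqrt ((1 - p) / p) ^ k * ((-1) ^ (k + 1) * Real.sqrt (p / (1 - p)) ^ k)
            = (-1 : ℝ) ^ (k + 1) * (Real.sqrt ((1 - p) / p) * Real.sqrt (p / (1 - p))) ^ k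
            by ring, hsq, one_pow, mul_one, pow_succ]
          ring)]
      rw [hind]
      simp [hΛτ]
    · rw [entry_eval S i j (fun k => (-1) ^ (k + 1) * Real.sqrt (p / (1 - p)) ^ k)
        (fun k => Real.sqrt ((1 - p) / p) ^ k) (-1) (-1)
        (fun k => by
          rw [show ((-1 : ℝ) ^ (k + 1) * Real.sqrt (p / (1 - p)) ^ k) * Real.sqrt ((1 - p) / p) ^ k
            = (-1 : ℝ) ^ (k + 1) * (Real.sqrt ((1 - p) / p) * Real.sqrt (p / (1 - p))) ^ k
            by ring, hsq, one_pow, mul_one, pow_succ]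
          ring)]
      rw [hind]
      simp [hΛτ]
    · rw [entry_eval S i j (fun k => (-1) ^ (k + 1) * Real.sqrt (p / (1 - p)) ^ k)
        (fun k => (-1) ^ (k + 1) * Real.sqrt (p / (1 - p)) ^ k) 1 (p / (1 - p))
        (fun k => by
          have h2 : ((-1 : ℝ) ^ (k + 1) * Real.sqrt (p / (1 - p)) ^ k) *
              ((-1 : ℝ) ^ (k + 1) * Real.sqrt (p / (1 - p)) ^ k)
            = ((-1 : ℝ) * (-1)) ^ (k + 1) *
              (Real.sqrt (p / (1 - p)) * Real.sqrt (p / (1 - p))) ^ k := by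
            rw [mul_pow, mul_pow]; ring
          rw [h2, Real.mul_self_sqrt hxb]; norm_num)]
      rw [show p / (1 - p) + 1 = (1 - p)⁻¹ by field_simp; ring, inv_pow, one_mul]
      simp [hΛ0]
  rw [key]
  refine Finset.sum_induction _ _ (fun a b => Matrix.PosSemidef.add) Matrix.PosSemidef.zero
    (fun W _ => ?_)
  split
  · rw [Matrix.vecMulVec_eq Unit, show Matrix.replicateCol Unit (cvec m n S p W)
      = (Matrix.replicateRow Unit (cvec m n S p W)).conjTranspose by
        rw [Matrix.conjTranspose_replicateRow]; simp]
    exact Matrix.posSemidef_conjTranspose_mul_self _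
  · exact Matrix.PosSemidef.zero
end

section
/- Let $Z_1,\dots,Z_m$ be i.i.d. Bernoulli($p$). For subsets $S_i\subseteq\{1,\dots,m\}$ with $|S_i|=s_i$, $C_i = \prod_{k\in S_i}(1-Z_k)$, and fixed reals $w_i$: $\sum_{i=1}^n \frac{w_i C_i}{(1-p)^{s_i}} - \sum_{i=1}^n w_i = \sum_{\ell=1}^{\max_i s_i}\sum_{\substack{W\subseteq\{1,\dots,m\}\\|W|=\ell}} \left(\frac{(-1)^\ell}{(1-p)^\ell}\sum_{i: W\subseteq S_i} w_i\right)\prod_{k\in W}(Z_k - p)$. -/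
open Finset

/-- The real-valued treatment indicator of intervention unit `k`,
for i.i.d. Bernoulli(p) assignments encoded by `ω : Fin m → Bool`. -/
def Z {m : ℕ} (k : Fin m) (ω : Fin m → Bool) : ℝ := if ω k then 1 else 0

/-- Random-polynomial decomposition of the centered control-arm
Horvitz–Thompson sum, where `Cᵢ = ∏_{k ∈ Sᵢ} (1 - Zₖ)` and `Z̃ₖ = Zₖ - p`. -/
theorem stmt15 (m n : ℕ) (p : ℝ) (hp0 : 0 < p) (hp1 : p < 1)
    (S : Fin n → Finset (Fin m)) (w : Fin n → ℝ) (ω : Fin m → Bool) :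
    (∑ i, w i * (∏ k ∈ S i, (1 - Z k ω)) / (1 - p) ^ (S i).card) - ∑ i, w i
      = ∑ ℓ ∈ Finset.Icc 1 ((Finset.univ : Finset (Fin n)).sup fun i => (S i).card),
          ∑ W ∈ Finset.powersetCard ℓ (Finset.univ : Finset (Fin m)),
            ((-1 : ℝ) ^ ℓ / (1 - p) ^ ℓ *
                ∑ i ∈ (Finset.univ : Finset (Fin n)).filter fun i => W ⊆ S i, w i)
              * ∏ k ∈ W, (Z k ω - p) := by
  have hne : (1 - p) ≠ 0 := by linarith
  set M := (Finset.univ : Finset (Fin n)).sup fun i => (S i).card with hM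
  set g : Fin n → Finset (Fin m) → ℝ := fun i W =>
    ((-1 : ℝ) ^ W.card / (1 - p) ^ W.card * w i) * ∏ k ∈ W, (Z k ω - p) with hg
  -- per-i expansion
  have key : ∀ i, w i * (∏ k ∈ S i, (1 - Z k ω)) / (1 - p) ^ (S i).card
      = ∑ W ∈ (S i).powerset, g i W := by
    intro i
    have hprod : ∏ k ∈ S i, (1 - Z k ω)
        = ∑ W ∈ (S i).powerset,
            (((-1 : ℝ) ^ W.card * ∏ k ∈ W, (Z k ω - p)) * (1 - p) ^ ((S i).card - W.card)) := by
      have h1 : ∀ k ∈ S i, (1 - Z k ω) = (-(Z k ω - p)) + (1 - p) := by intro k _; ring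
      rw [Finset.prod_congr rfl h1, Finset.prod_add]
      refine Finset.sum_congr rfl fun W hW => ?_
      rw [Finset.mem_powerset] at hW
      rw [Finset.prod_const, Finset.card_sdiff_of_subset hW]
      congr 1
      rw [show (fun k => -(Z k ω - p)) = fun k => (-1 : ℝ) * (Z k ω - p) by funext k; ring,
        Finset.prod_mul_distrib, Finset.prod_const]
    rw [hprod, Finset.mul_sum, Finset.sum_div]
    refine Finset.sum_congr rfl fun W hW => ?_
    rw [Finset.mem_powerset] at hW
    have hc : W.card ≤ (S i).card := Finset.card_le_card hW
    have hsplit : (1 - p) ^ (S i).card = (1 - p) ^ W.card * (1 - p) ^ ((S i).card - W.card) := by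
      rw [← pow_add, Nat.add_sub_cancel' hc]
    rw [hg]
    field_simp [hsplit]
    rw [hsplit]; ring
  -- swap sums
  have swap : ∑ i, ∑ W ∈ (S i).powerset, g i W
      = ∑ W ∈ (Finset.univ : Finset (Fin m)).powerset,
          ∑ i ∈ (Finset.univ : Finset (Fin n)).filter (fun i => W ⊆ S i), g i W := by
    have h1 : ∀ i : Fin n, ∑ W ∈ (S i).powerset, g i W
        = ∑ W ∈ (Finset.univ : Finset (Fin m)).powerset, if W ⊆ S i then g i W else 0 := by
      intro i
      rw [← Finset.sum_filter]
      congr 1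
      ext W
      simp [Finset.mem_powerset, Finset.subset_univ]
    simp_rw [h1]
    rw [Finset.sum_comm]
    exact Finset.sum_congr rfl fun W _ => (Finset.sum_filter _ _).symm
  -- coefficient function on W
  have sum_pows : ∑ W ∈ (Finset.univ : Finset (Fin m)).powerset,
        ∑ i ∈ (Finset.univ : Finset (Fin n)).filter (fun i => W ⊆ S i), g i W
      = ∑ ℓ ∈ Finset.range (m + 1), ∑ W ∈ Finset.powersetCard ℓ (Finset.univ : Finset (Fin m)),
          ∑ i ∈ (Finset.univ : Finset (Fin n)).filter (fun i => W ⊆ S i), g i W := by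
    rw [Finset.sum_powerset]
    simp
  -- the ℓ = 0 term
  have zero_term : ∑ W ∈ Finset.powersetCard 0 (Finset.univ : Finset (Fin m)),
        ∑ i ∈ (Finset.univ : Finset (Fin n)).filter (fun i => W ⊆ S i), g i W = ∑ i, w i := by
    rw [Finset.powersetCard_zero, Finset.sum_singleton]
    simp [hg]
  -- terms with ℓ > M vanish
  have high_vanish : ∀ ℓ, M < ℓ →
      ∑ W ∈ Finset.powersetCard ℓ (Finset.univ : Finset (Fin m)),
        ∑ i ∈ (Finset.univ : Finset (Fin n)).filter (fun i => W ⊆ S i), g i W = 0 := by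
    intro ℓ hℓ
    refine Finset.sum_eq_zero fun W hW => ?_
    refine Finset.sum_eq_zero fun i hi => ?_
    rw [Finset.mem_filter] at hi
    rw [Finset.mem_powersetCard] at hW
    exfalso
    have h1 : (S i).card ≤ M := Finset.le_sup (f := fun i => (S i).card) (Finset.mem_univ i)
    have h2 : W.card ≤ (S i).card := Finset.card_le_card hi.2
    omega
  have hMm : M ≤ m := by
    refine Finset.sup_le fun i _ => ?_
    simpa using Finset.card_le_card (Finset.subset_univ (S i))
  -- reduce range (m+1) to Icc 1 M plus ℓ=0
  have range_split : ∑ ℓ ∈ Finset.range (m + 1),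
        ∑ W ∈ Finset.powersetCard ℓ (Finset.univ : Finset (Fin m)),
          ∑ i ∈ (Finset.univ : Finset (Fin n)).filter (fun i => W ⊆ S i), g i W
      = (∑ i, w i) + ∑ ℓ ∈ Finset.Icc 1 M,
          ∑ W ∈ Finset.powersetCard ℓ (Finset.univ : Finset (Fin m)),
            ∑ i ∈ (Finset.univ : Finset (Fin n)).filter (fun i => W ⊆ S i), g i W := by
    have hsub' : Finset.Icc 1 M ⊆ Finset.Icc 1 m := by
      intro ℓ hℓ
      rw [Finset.mem_Icc] at hℓ ⊢
      omega
    have hins : Finset.range (m + 1) = insert 0 (Finset.Icc 1 m) := by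
      ext ℓ
      simp only [Finset.mem_range, Finset.mem_insert, Finset.mem_Icc]
      omega
    rw [hins, Finset.sum_insert (by simp)]
    rw [zero_term]
    congr 1
    rw [← Finset.sum_subset hsub']
    · intro ℓ hℓ hℓ'
      rw [Finset.mem_Icc] at hℓ
      rw [Finset.mem_Icc] at hℓ'
      exact high_vanish ℓ (by omega)
  -- put everything together
  calc (∑ i, w i * (∏ k ∈ S i, (1 - Z k ω)) / (1 - p) ^ (S i).card) - ∑ i, w i
      = (∑ i, ∑ W ∈ (S i).powerset, g i W) - ∑ i, w i := by
        rw [Finset.sum_congr rfl fun i _ => key i]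
    _ = (∑ ℓ ∈ Finset.range (m + 1),
          ∑ W ∈ Finset.powersetCard ℓ (Finset.univ : Finset (Fin m)),
            ∑ i ∈ (Finset.univ : Finset (Fin n)).filter (fun i => W ⊆ S i), g i W) - ∑ i, w i := by
        rw [swap, sum_pows]
    _ = ∑ ℓ ∈ Finset.Icc 1 M,
          ∑ W ∈ Finset.powersetCard ℓ (Finset.univ : Finset (Fin m)),
            ∑ i ∈ (Finset.univ : Finset (Fin n)).filter (fun i => W ⊆ S i), g i W := by
        rw [range_split]; ring
    _ = _ := by
        refine Finset.sum_congr rfl fun ℓ hℓ => Finset.sum_congr rfl fun W hW => ?_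
        rw [Finset.mem_powersetCard] at hW
        rw [hg]
        simp only [hW.2]
        rw [Finset.mul_sum, Finset.sum_mul]
end
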